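/- u^n is a stationary distribution of the threshold-n Markov chain: for every state j ∈ {1,…,L}, u^n(j) = Σ_{i=1}^{L} u^n(i)·P(i,j). -/

import Mathlib

/-- Fix `p` with `0 < p < 1`, integers `L ≥ 2` and `1 ≤ n ≤ L`.
Let `u^n` be as in the paper, and let `P` be the transition kernel of the
threshold-`n` Markov chain on `{1,…,L}`: if `i < n` the chain moves from `i`
to `i+1` with probability `1`; if `i ≥ n` it moves to state `1` with
probability `p` and to `min(i+1,L)` with probability `1−p`; all other
transitions have probability `0`.  Then `u^n` is a stationary distribution:
for every state `j ∈ {1,…,L}`, `u^n(j) = Σ_{i=1}^{L} u^n(i)·P(i,j)`. -/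
theorem stmt1 (p : ℝ) (hp0 : 0 < p) (hp1 : p < 1) (L n : ℕ) (hL : 2 ≤ L)
    (hn1 : 1 ≤ n) (hnL : n ≤ L) (u : ℕ → ℝ)
    (hu1 : ∀ i : ℕ, 1 ≤ i → i ≤ n → i < L → u i = p / ((n : ℝ) * p + 1 - p))
    (hu2 : ∀ i : ℕ, n < i → i < L →
      u i = (1 - p) ^ (i - n) * p / ((n : ℝ) * p + 1 - p))
    (hu3 : u L = (1 - p) ^ (L - n) / ((n : ℝ) * p + 1 - p))
    (P : ℕ → ℕ → ℝ)
    (hP : ∀ i ∈ Finset.Icc 1 L, ∀ j ∈ Finset.Icc 1 L,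
      P i j = if i < n then (if j = i + 1 then 1 else 0)
        else (if j = 1 then p else if j = min (i + 1) L then 1 - p else 0)) :
    ∀ j ∈ Finset.Icc 1 L, u j = ∑ i ∈ Finset.Icc 1 L, u i * P i j := by
  intro j hj
  have hj' := Finset.mem_Icc.mp hj
  obtain ⟨hj1, hjL⟩ := hj'
  set D : ℝ := (n : ℝ) * p + 1 - p with hDdef
  have hn1' : (1 : ℝ) ≤ (n : ℝ) := by exact_mod_cast hn1
  have hD0 : D ≠ 0 := by simp only [hDdef]; nlinarith
  have hu : ∀ i : ℕ, n ≤ i → i < L → u i = (1 - p) ^ (i - n) * p / D := by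
    intro i hni hiL
    rcases eq_or_lt_of_le hni with h | h
    · rw [← h, hu1 n hn1 le_rfl (by omega)]
      simp
    · exact hu2 i h hiL
  have hrw : ∑ i ∈ Finset.Icc 1 L, u i * P i j
      = ∑ i ∈ Finset.Icc 1 L, u i * (if i < n then (if j = i + 1 then 1 else 0)
        else (if j = 1 then p else if j = min (i + 1) L then 1 - p else 0)) :=
    Finset.sum_congr rfl (fun i hi => by rw [hP i hi j hj])
  rw [hrw]
  by_cases hj1' : j = 1
  · -- j = 1
    subst hj1'
    have hstep : ∀ i ∈ Finset.Icc 1 L,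
        u i * (if i < n then (if 1 = i + 1 then 1 else 0)
        else (if 1 = 1 then p else if 1 = min (i + 1) L then 1 - p else 0))
        = if n ≤ i then u i * p else 0 := by
      intro i hi
      simp only [Finset.mem_Icc] at hi
      split_ifs with h1 h2 h3 <;> first | rfl | omega | simp
    rw [Finset.sum_congr rfl hstep]
    have hfilt : ∑ i ∈ Finset.Icc 1 L, (if n ≤ i then u i * p else 0)
        = ∑ i ∈ Finset.Icc n L, u i * p := by
      rw [← Finset.sum_filter]
      apply Finset.sum_congr _ (fun _ _ => rfl)
      ext x
      simp only [Finset.mem_filter, Finset.mem_Icc]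
      omega
    rw [hfilt, ← Finset.sum_mul]
    have hS : ∑ i ∈ Finset.Icc n L, u i = 1 / D := by
      rcases eq_or_lt_of_le hnL with h | h
      · rw [h]
        simp only [Finset.Icc_self, Finset.sum_singleton, hu3, h, Nat.sub_self, pow_zero]
      · have hL1 : L = (L - 1) + 1 := by omega
        rw [hL1, Finset.sum_Icc_succ_top (by omega : n ≤ L - 1 + 1)]
        rw [← hL1, hu3]
        have hmid : ∑ i ∈ Finset.Icc n (L - 1), u i
            = ∑ k ∈ Finset.range (L - n), (1 - p) ^ k * p / D := by
          have hIc : Finset.Icc n (L - 1) = Finset.Ico n L := by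
            ext x
            simp only [Finset.mem_Icc, Finset.mem_Ico]
            omega
          rw [hIc, Finset.sum_Ico_eq_sum_range]
          apply Finset.sum_congr rfl
          intro k hk
          simp only [Finset.mem_range] at hk
          rw [hu (n + k) (by omega) (by omega), Nat.add_sub_cancel_left]
        rw [hmid]
        have hgeom : ∑ k ∈ Finset.range (L - n), (1 - p) ^ k
            = ((1 - p) ^ (L - n) - 1) / ((1 - p) - 1) :=
          geom_sum_eq (by intro hcon; nlinarith) _
        rw [← Finset.sum_div, ← Finset.sum_mul, hgeom]
        field_simp
        rw [show (1:ℝ) - p - 1 = -p by ring, mul_comm p, mul_div_assoc, div_neg,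
          div_self hp0.ne']
        ring
    rw [hS, hu1 1 le_rfl hn1 (by omega)]
    field_simp
  · -- j ≥ 2
    have hj2 : 2 ≤ j := by omega
    by_cases hjL' : j = L
    · -- j = L : two incoming terms
      subst hjL'
      have hsub : ({j - 1, j} : Finset ℕ) ⊆ Finset.Icc 1 j := by
        intro x hx
        simp only [Finset.mem_insert, Finset.mem_singleton] at hx
        simp only [Finset.mem_Icc]
        omega
      have hzero : ∀ i ∈ Finset.Icc 1 j, i ∉ ({j - 1, j} : Finset ℕ) →
          u i * (if i < n then (if j = i + 1 then 1 else 0)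
          else (if j = 1 then p else if j = min (i + 1) j then 1 - p else 0)) = 0 := by
        intro i hi hni
        simp only [Finset.mem_Icc] at hi
        simp only [Finset.mem_insert, Finset.mem_singleton] at hni
        push_neg at hni
        split_ifs with h1 h2 h3 h4 <;> first | (exact mul_zero _) | (exfalso; omega)
      rw [← Finset.sum_subset hsub hzero]
      rw [Finset.sum_pair (by omega : j - 1 ≠ j)]
      have hLL : ¬ j < n := by omega
      have hL1ne : j ≠ 1 := by omega
      have hminL : min (j + 1) j = j := by omega
      have hminL1 : min (j - 1 + 1) j = j := by omega
      rcases eq_or_lt_of_le hnL with h | h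
      · -- n = L
        have hlt : j - 1 < n := by omega
        rw [if_pos hlt, if_pos (by omega : j = j - 1 + 1), if_neg hLL, if_neg hL1ne,
          hminL, if_pos rfl, mul_one]
        rw [hu1 (j - 1) (by omega) (by omega) (by omega), hu3,
          (by omega : j - n = 0), pow_zero]
        field_simp
        ring
      · -- n < L
        have hnlt : ¬ (j - 1 < n) := by omega
        rw [if_neg hnlt, if_neg hL1ne, if_neg hLL, if_neg hL1ne, hminL1, if_pos rfl,
          hminL, if_pos rfl]
        rw [hu (j - 1) (by omega) (by omega), hu3]
        rw [(by omega : j - n = (j - 1 - n) + 1), pow_succ]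
        field_simp
        ring
    · -- 2 ≤ j < L : single incoming term from j - 1
      have hjL2 : j < L := by omega
      rw [Finset.sum_eq_single_of_mem (j - 1)
        (Finset.mem_Icc.mpr ⟨by omega, by omega⟩)]
      · by_cases hjn : j ≤ n
        · have h1 : j - 1 < n := by omega
          rw [if_pos h1, if_pos (by omega : j = j - 1 + 1), mul_one]
          rw [hu1 (j - 1) (by omega) (by omega) (by omega),
            hu1 j (by omega) hjn (by omega)]
        · have h1 : ¬ (j - 1 < n) := by omega
          have hmin : min (j - 1 + 1) L = j := by omega
          rw [if_neg h1, if_neg hj1', hmin, if_pos rfl]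
          rw [hu (j - 1) (by omega) (by omega), hu j (by omega) (by omega)]
          rw [(by omega : j - n = (j - 1 - n) + 1), pow_succ]
          ring
      · intro i hi hne
        simp only [Finset.mem_Icc] at hi
        split_ifs with h1 h2 h3 h4 <;>
          first | (exact mul_zero _) | (exfalso; omega)
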